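/- Let h be a bounded self-adjoint operator on ℂ^{2N} ⊗ H with chiral symmetry J h J⁻¹ = −h (J = diag(1_N, −1_N) ⊗ id), and suppose 0 is not in the spectrum of h. Let p be the spectral projection of h onto the negative spectrum. Then p has the block form p = (1/2)[[1_N, −u*],[−u, 1_N]] for a unique unitary operator u on ℂ^N ⊗ H. -/

import Mathlib

set_option maxHeartbeats 1000000

open ContinuousLinearMap

theorem stmt_4 {K : Type*} [NormedAddCommGroup K] [InnerProductSpace ℂ K] [CompleteSpace K]
    (J h : WithLp 2 (K × K) →L[ℂ] WithLp 2 (K × K))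
    (hJ : ∀ x y : K,
      J ((WithLp.equiv 2 (K × K)).symm (x, y)) = (WithLp.equiv 2 (K × K)).symm (x, -y))
    (hsa : IsSelfAdjoint h)
    (hchiral : J ∘L h ∘L J = -h)
    (hgap : (0 : ℂ) ∉ spectrum ℂ h)
    (p : WithLp 2 (K × K) →L[ℂ] WithLp 2 (K × K))
    (hp : p = cfc (fun t : ℝ => if t < 0 then (1 : ℝ) else 0) h) :
    ∃! u : K →L[ℂ] K,
      ((ContinuousLinearMap.adjoint u ∘L u = 1 ∧ u ∘L ContinuousLinearMap.adjoint u = 1) ∧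
        ∀ x y : K,
          p ((WithLp.equiv 2 (K × K)).symm (x, y)) =
            (WithLp.equiv 2 (K × K)).symm
              ((1 / 2 : ℂ) • (x - (ContinuousLinearMap.adjoint u) y),
               (1 / 2 : ℂ) • (-(u x) + y))) := by
  set E := WithLp.equiv 2 (K × K) with hE
  set f : ℝ → ℝ := fun t => if t < 0 then (1 : ℝ) else 0 with hfdef
  have hspec0 : (0 : ℝ) ∉ spectrum ℝ h := by
    intro h0
    exact hgap (by simpa using spectrum.algebraMap_mem ℂ h0)
  have hfc0 : ContinuousOn f {(0 : ℝ)}ᶜ := by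
    intro t ht
    have hne : t ≠ 0 := ht
    apply ContinuousAt.continuousWithinAt
    rcases lt_or_gt_of_ne hne with h1 | h1
    · apply Filter.EventuallyEq.continuousAt (y := (1 : ℝ))
      filter_upwards [Iio_mem_nhds h1] with s hs
      simp [hfdef, Set.mem_Iio.mp hs]
    · apply Filter.EventuallyEq.continuousAt (y := (0 : ℝ))
      filter_upwards [Ioi_mem_nhds h1] with s hs
      simp [hfdef, not_lt.mpr (le_of_lt (Set.mem_Ioi.mp hs))]
  have hsub : spectrum ℝ h ⊆ {(0 : ℝ)}ᶜ := by
    intro t ht h0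
    exact hspec0 (by rwa [Set.mem_singleton_iff.mp h0] at ht)
  have hfc : ContinuousOn f (spectrum ℝ h) := hfc0.mono hsub
  have hpsa : IsSelfAdjoint p := hp ▸ cfc_predicate f h
  have hpmul : p * p = p := by
    rw [hp, ← cfc_mul f f h hfc hfc]
    apply cfc_congr
    intro t _
    by_cases h1 : t < 0 <;> simp [hfdef, h1]
  -- J facts
  have hJ' : ∀ v : WithLp 2 (K × K), J v = E.symm ((E v).1, -(E v).2) := fun v => hJ _ _
  have hJJ : ∀ v, J (J v) = v := by
    intro v
    rw [hJ' v, hJ' _]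
    simp
  have hJJ1 : J * J = 1 := by
    ext v
    exact hJJ v
  have hJsa : IsSelfAdjoint J := by
    rw [isSelfAdjoint_iff, ContinuousLinearMap.star_eq_adjoint]
    symm
    rw [ContinuousLinearMap.eq_adjoint_iff]
    intro v w
    rw [hJ' v, hJ' w]
    simp [hE, WithLp.prod_inner_apply, WithLp.toLp_fst, WithLp.toLp_snd,
      WithLp.ofLp_fst, WithLp.ofLp_snd]
  -- the conjugation star-algebra homomorphism
  let Φ : ((WithLp 2 (K × K)) →L[ℂ] WithLp 2 (K × K)) →⋆ₐ[ℂ]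
      ((WithLp 2 (K × K)) →L[ℂ] WithLp 2 (K × K)) :=
  { toFun := fun T => J * T * J
    map_one' := by simp only [mul_one, hJJ1]
    map_mul' := fun S T => by
      simp only [mul_assoc]
      rw [← mul_assoc J J, hJJ1, one_mul]
    map_zero' := by simp
    map_add' := fun S T => by simp [mul_add, add_mul]
    commutes' := fun r => by
      simp [Algebra.algebraMap_eq_smul_one, mul_smul_comm, smul_mul_assoc, hJJ1]
    map_star' := fun T => by
      simp only [star_mul, hJsa.star_eq, mul_assoc] }
  have hΦcont : Continuous Φ := (continuous_mul_right J).comp (continuous_mul_left J)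
  have hΦh : J * h * J = -h := by rw [← hchiral]; rfl
  have hΦhsa : IsSelfAdjoint (J * h * J) := by rw [hΦh]; exact IsSelfAdjoint.neg (R := WithLp 2 (K × K) →L[ℂ] WithLp 2 (K × K)) hsa
  have hmap : Φ (cfc f h) = cfc f (Φ h) :=
    StarAlgHom.map_cfc Φ f h hfc hΦcont hsa hΦhsa
  have hfc' : ContinuousOn f ((-·) '' spectrum ℝ h) := by
    apply hfc0.mono
    rintro t ⟨s, hs, rfl⟩ h0
    exact hspec0 (by rwa [show s = 0 by simpa using Set.mem_singleton_iff.mp h0] at hs)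
  have key : J * p * J = 1 - p := by
    calc J * p * J = Φ p := rfl
      _ = cfc f (Φ h) := by rw [hp]; exact hmap
      _ = cfc f (-h) := by rw [show Φ h = -h from hΦh]
      _ = cfc (fun t => f (-t)) h := (cfc_comp_neg f h hfc' hsa).symm
      _ = cfc (fun t => 1 - f t) h := by
          apply cfc_congr
          intro t ht
          have hne : t ≠ 0 := fun h0 => hspec0 (h0 ▸ ht)
          rcases lt_or_gt_of_ne hne with h1 | h1
          · simp [hfdef, h1, not_lt.mpr (le_of_lt (neg_pos.mpr h1))]
          · simp [hfdef, not_lt.mpr (le_of_lt h1), neg_lt_zero.mpr h1]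
      _ = 1 - p := by
          rw [cfc_sub (fun _ => (1:ℝ)) f h continuousOn_const hfc, cfc_const_one ℝ h, hp]
  have key' : ∀ v, J (p (J v)) = v - p v := fun v => by
    simpa using DFunLike.congr_fun key v
  -- blocks
  set b : K →L[ℂ] K :=
    (ContinuousLinearMap.fst ℂ K K ∘L
      (WithLp.prodContinuousLinearEquiv 2 ℂ K K).toContinuousLinearMap) ∘L p ∘L
      ((WithLp.prodContinuousLinearEquiv 2 ℂ K K).symm.toContinuousLinearMap ∘L
        ContinuousLinearMap.inr ℂ K K) with hbdef
  set c : K →L[ℂ] K :=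
    (ContinuousLinearMap.snd ℂ K K ∘L
      (WithLp.prodContinuousLinearEquiv 2 ℂ K K).toContinuousLinearMap) ∘L p ∘L
      ((WithLp.prodContinuousLinearEquiv 2 ℂ K K).symm.toContinuousLinearMap ∘L
        ContinuousLinearMap.inl ℂ K K) with hcdef
  have hbapp : ∀ y : K, b y = (E (p (E.symm (0, y)))).1 := fun _ => rfl
  have hcapp : ∀ x : K, c x = (E (p (E.symm (x, 0)))).2 := fun _ => rfl
  have hEadd : ∀ v w : K × K, E.symm (v + w) = E.symm v + E.symm w := fun _ _ => rfl
  have hEinj : Function.Injective E.symm := E.symm.injective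
  have hpadd : ∀ x y : K, p (E.symm (x, y)) = p (E.symm (x, 0)) + p (E.symm (0, y)) := by
    intro x y
    have h0 : ((x, y) : K × K) = (x, 0) + (0, y) := by simp
    rw [h0, hEadd, map_add]
  have half : ∀ a x : K, a = x - a → a = (2:ℂ)⁻¹ • x := by
    intro a x hax
    rw [eq_sub_iff_add_eq] at hax
    have h2 : (2:ℂ) • a = x := by rw [two_smul]; exact hax
    rw [← h2, inv_smul_smul₀ two_ne_zero]
  -- first column
  have h1 : ∀ x : K, p (E.symm (x, 0)) = E.symm ((2:ℂ)⁻¹ • x, c x) := by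
    intro x
    have hJv : J (E.symm (x, 0)) = E.symm (x, 0) := by rw [hJ x 0, neg_zero]
    have hk : J (p (E.symm (x, 0))) = E.symm (x, 0) - p (E.symm (x, 0)) := by
      have := key' (E.symm (x, 0)); rwa [hJv] at this
    set w := p (E.symm (x, 0)) with hw
    rw [hJ' w,
      show (E.symm (x, 0) : WithLp 2 (K × K)) - w
          = E.symm (((x, 0) : K × K) - ((E w).1, (E w).2)) from rfl] at hk
    have hk2 := hEinj hk
    have hfst : (E w).1 = x - (E w).1 := congrArg Prod.fst hk2
    have hhalf : (E w).1 = (2:ℂ)⁻¹ • x := half _ _ hfst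
    calc w = E.symm ((E w).1, (E w).2) := rfl
      _ = E.symm ((2:ℂ)⁻¹ • x, c x) := by rw [hhalf, hcapp]
  -- second column
  have h2 : ∀ y : K, p (E.symm (0, y)) = E.symm (b y, (2:ℂ)⁻¹ • y) := by
    intro y
    set w := p (E.symm (0, y)) with hw
    have hneg : ((0, -y) : K × K) = -(0, y) := by simp
    have hEneg : (E.symm (0, -y) : WithLp 2 (K × K)) = -E.symm (0, y) := congrArg E.symm hneg
    have hk : J (p (J (E.symm (0, y)))) = E.symm (0, y) - w := key' _
    rw [hJ 0 y, hEneg, map_neg p, map_neg J] at hk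
    have hk' : J w = w - E.symm (0, y) := by
      have := congrArg Neg.neg hk
      rwa [neg_neg, neg_sub] at this
    rw [hJ' w,
      show (w : WithLp 2 (K × K)) - E.symm (0, y)
          = E.symm ((((E w).1, (E w).2) : K × K) - (0, y)) from rfl] at hk'
    have hk2 := hEinj hk'
    have hsnd : -(E w).2 = (E w).2 - y := congrArg Prod.snd hk2
    have hsnd' : (E w).2 = y - (E w).2 := by rw [← neg_sub, ← hsnd, neg_neg]
    have hhalf : (E w).2 = (2:ℂ)⁻¹ • y := half _ _ hsnd'
    calc w = E.symm ((E w).1, (E w).2) := rfl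
      _ = E.symm (b y, (2:ℂ)⁻¹ • y) := by rw [hhalf, hbapp]
  -- full block formula
  have hblock : ∀ x y : K,
      p (E.symm (x, y)) = E.symm ((2:ℂ)⁻¹ • x + b y, c x + (2:ℂ)⁻¹ • y) := by
    intro x y
    rw [hpadd x y, h1 x, h2 y, ← hEadd, Prod.mk_add_mk]
  have hppv : ∀ v, p (p v) = p v := fun v => by
    have := DFunLike.congr_fun hpmul v
    simpa using this
  -- off-diagonal products
  have hbc : ∀ x : K, b (c x) = (4:ℂ)⁻¹ • x := by
    intro x
    have := hppv (E.symm (x, 0))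
    rw [h1 x, hblock ((2:ℂ)⁻¹ • x) (c x)] at this
    have h3 := congrArg Prod.fst (hEinj this)
    simp only at h3
    -- h3 : 2⁻¹ • (2⁻¹ • x) + b (c x) = 2⁻¹ • x
    have h4 : ((2:ℂ)⁻¹ * (2:ℂ)⁻¹) • x + b (c x) = (2:ℂ)⁻¹ • x := by
      rwa [← smul_smul]
    have : b (c x) = (2:ℂ)⁻¹ • x - ((2:ℂ)⁻¹ * (2:ℂ)⁻¹) • x := by
      rw [← h4]; abel
    rw [this, ← sub_smul]
    norm_num
  have hcb : ∀ y : K, c (b y) = (4:ℂ)⁻¹ • y := by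
    intro y
    have := hppv (E.symm (0, y))
    rw [h2 y, hblock (b y) ((2:ℂ)⁻¹ • y)] at this
    have h3 := congrArg Prod.snd (hEinj this)
    simp only [map_smul] at h3
    -- h3 : c (b y) + 2⁻¹ • (2⁻¹ • y) = 2⁻¹ • y
    have h4 : c (b y) + ((2:ℂ)⁻¹ * (2:ℂ)⁻¹) • y = (2:ℂ)⁻¹ • y := by
      rwa [← smul_smul]
    have : c (b y) = (2:ℂ)⁻¹ • y - ((2:ℂ)⁻¹ * (2:ℂ)⁻¹) • y := by
      rw [← h4]; abel
    rw [this, ← sub_smul]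
    norm_num
  -- c is the adjoint of b
  have hadj : c = ContinuousLinearMap.adjoint b := by
    rw [ContinuousLinearMap.eq_adjoint_iff]
    intro x y
    have hinner : inner (𝕜 := ℂ) (p (E.symm (x, 0))) (E.symm (0, y))
        = inner (𝕜 := ℂ) (E.symm (x, 0)) (p (E.symm (0, y))) := by
      nth_rewrite 1 [← hpsa.adjoint_eq]
      exact ContinuousLinearMap.adjoint_inner_left p _ _
    rw [h1 x, h2 y] at hinner
    simpa [hE, WithLp.prod_inner_apply, WithLp.toLp_fst, WithLp.toLp_snd]
      using hinner
  have hadjc : ContinuousLinearMap.adjoint c = b := by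
    rw [hadj, ContinuousLinearMap.adjoint_adjoint]
  have hadju : ContinuousLinearMap.adjoint ((-2:ℂ) • c) = (-2:ℂ) • b := by
    rw [← ContinuousLinearMap.star_eq_adjoint, star_smul,
      ContinuousLinearMap.star_eq_adjoint, hadjc]
    norm_num
  refine ⟨(-2:ℂ) • c, ⟨⟨?_, ?_⟩, ?_⟩, ?_⟩
  · ext x
    rw [hadju]
    simp only [ContinuousLinearMap.comp_apply, ContinuousLinearMap.smul_apply, map_smul,
      ContinuousLinearMap.one_apply, hbc x, smul_smul]
    norm_num
  · ext x
    rw [hadju]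
    simp only [ContinuousLinearMap.comp_apply, ContinuousLinearMap.smul_apply, map_smul,
      ContinuousLinearMap.one_apply, hcb x, smul_smul]
    norm_num
  · intro x y
    rw [hblock x y, hadju]
    congr 1
    rw [Prod.mk.injEq]
    constructor
    · simp only [ContinuousLinearMap.smul_apply, ContinuousLinearMap.neg_apply]
      module
    · simp only [ContinuousLinearMap.smul_apply, ContinuousLinearMap.neg_apply]
      module
  · rintro u' ⟨⟨hu1, hu2⟩, hu3⟩
    ext x
    have h3 := hu3 x 0
    rw [h1 x] at h3
    have h5 : c x = (1/2 : ℂ) • (-(u' x)) := by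
      simpa using congrArg Prod.snd (hEinj h3)
    show u' x = ((-2:ℂ) • c) x
    rw [ContinuousLinearMap.smul_apply, h5, smul_smul]
    norm_num
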